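/- For every real number x with 0 ≤ x ≤ 1, arcsin x ≤ φ(x), where φ(x) = (π(2 − √2)/(π − 2√2))·(√(1 + x) − √(1 − x)) / (√2(4 − π)/(π − 2√2) + √(1 + x) + √(1 − x)). -/

import Mathlib

/-- The upper bound `φ` for `arcsin` obtained by the λ-method of Mitrinović–Vasić. -/
noncomputable def phiBound (x : ℝ) : ℝ :=
  (Real.pi * (2 - Real.sqrt 2) / (Real.pi - 2 * Real.sqrt 2)) *
      (Real.sqrt (1 + x) - Real.sqrt (1 - x)) /
    (Real.sqrt 2 * (4 - Real.pi) / (Real.pi - 2 * Real.sqrt 2) +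
      Real.sqrt (1 + x) + Real.sqrt (1 - x))

open Real Set

private lemma nonneg_of_hasDerivAt {f f' : ℝ → ℝ}
    (hd : ∀ x, HasDerivAt f (f' x) x) (h0 : f 0 = 0)
    (h' : ∀ x, 0 ≤ x → 0 ≤ f' x) {x : ℝ} (hx : 0 ≤ x) : 0 ≤ f x := by
  have hmono : MonotoneOn f (Ici 0) := by
    refine monotoneOn_of_deriv_nonneg (convex_Ici 0)
      (fun y _ => (hd y).continuousAt.continuousWithinAt)
      (fun y _ => (hd y).differentiableAt.differentiableWithinAt) ?_
    intro y hy
    rw [(hd y).deriv]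
    rw [interior_Ici] at hy
    exact h' y (le_of_lt hy)
  have := hmono self_mem_Ici hx hx
  simpa [h0] using this

private lemma my_sin_ge3 {x : ℝ} (hx : 0 ≤ x) : x - x^3/6 ≤ Real.sin x := by
  have key : 0 ≤ Real.sin x - (x - x^3/6) := by
    refine nonneg_of_hasDerivAt (f := fun y => Real.sin y - (y - y^3/6)) (f' := fun y => Real.cos y - (1 - y^2/2)) (fun y => ?_) (by norm_num) (fun y _ => by nlinarith [Real.one_sub_sq_div_two_le_cos (x := y)]) hx
    have h2 : HasDerivAt (fun y : ℝ => y - y^3/6) (1 - y^2/2) y := by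
      have := (hasDerivAt_id y).sub ((hasDerivAt_pow 3 y).div_const 6)
      refine this.congr_deriv ?_
      simp; ring
    exact (Real.hasDerivAt_sin y).sub h2
  linarith

private lemma my_cos_le4 {x : ℝ} (hx : 0 ≤ x) : Real.cos x ≤ 1 - x^2/2 + x^4/24 := by
  have key : 0 ≤ (1 - x^2/2 + x^4/24) - Real.cos x := by
    refine nonneg_of_hasDerivAt (f := fun y => (1 - y^2/2 + y^4/24) - Real.cos y)
      (f' := fun y => (-y + y^3/6) + Real.sin y) (fun y => ?_) (by norm_num)
      (fun y hy => by nlinarith [my_sin_ge3 hy]) hx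
    have h2 : HasDerivAt (fun y : ℝ => 1 - y^2/2 + y^4/24) (-y + y^3/6) y := by
      have := (((hasDerivAt_const y (1:ℝ)).sub ((hasDerivAt_pow 2 y).div_const 2)).add ((hasDerivAt_pow 4 y).div_const 24))
      refine this.congr_deriv ?_
      simp; ring
    have := h2.sub (Real.hasDerivAt_cos y)
    refine this.congr_deriv ?_
    ring
  linarith

private lemma my_sin_le5 {x : ℝ} (hx : 0 ≤ x) : Real.sin x ≤ x - x^3/6 + x^5/120 := by
  have key : 0 ≤ (x - x^3/6 + x^5/120) - Real.sin x := by
    refine nonneg_of_hasDerivAt (f := fun y => (y - y^3/6 + y^5/120) - Real.sin y)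
      (f' := fun y => (1 - y^2/2 + y^4/24) - Real.cos y) (fun y => ?_) (by norm_num)
      (fun y hy => by nlinarith [my_cos_le4 hy]) hx
    have h2 : HasDerivAt (fun y : ℝ => y - y^3/6 + y^5/120) (1 - y^2/2 + y^4/24) y := by
      have := (((hasDerivAt_id y).sub ((hasDerivAt_pow 3 y).div_const 6)).add ((hasDerivAt_pow 5 y).div_const 120))
      refine this.congr_deriv ?_
      simp; ring
    exact h2.sub (Real.hasDerivAt_sin y)
  linarith

private lemma my_cos_ge6 {x : ℝ} (hx : 0 ≤ x) : 1 - x^2/2 + x^4/24 - x^6/720 ≤ Real.cos x := by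
  have key : 0 ≤ Real.cos x - (1 - x^2/2 + x^4/24 - x^6/720) := by
    refine nonneg_of_hasDerivAt (f := fun y => Real.cos y - (1 - y^2/2 + y^4/24 - y^6/720))
      (f' := fun y => -Real.sin y - (-y + y^3/6 - y^5/120)) (fun y => ?_) (by norm_num)
      (fun y hy => by nlinarith [my_sin_le5 hy]) hx
    have h2 : HasDerivAt (fun y : ℝ => 1 - y^2/2 + y^4/24 - y^6/720) (-y + y^3/6 - y^5/120) y := by
      have := ((((hasDerivAt_const y (1:ℝ)).sub ((hasDerivAt_pow 2 y).div_const 2)).add ((hasDerivAt_pow 4 y).div_const 24)).sub ((hasDerivAt_pow 6 y).div_const 720))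
      refine this.congr_deriv ?_
      simp; ring
    exact (Real.hasDerivAt_cos y).sub h2
  linarith

private lemma my_sin_ge7 {x : ℝ} (hx : 0 ≤ x) : x - x^3/6 + x^5/120 - x^7/5040 ≤ Real.sin x := by
  have key : 0 ≤ Real.sin x - (x - x^3/6 + x^5/120 - x^7/5040) := by
    refine nonneg_of_hasDerivAt (f := fun y => Real.sin y - (y - y^3/6 + y^5/120 - y^7/5040))
      (f' := fun y => Real.cos y - (1 - y^2/2 + y^4/24 - y^6/720)) (fun y => ?_) (by norm_num)
      (fun y hy => by nlinarith [my_cos_ge6 hy]) hx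
    have h2 : HasDerivAt (fun y : ℝ => y - y^3/6 + y^5/120 - y^7/5040) (1 - y^2/2 + y^4/24 - y^6/720) y := by
      have := ((((hasDerivAt_id y).sub ((hasDerivAt_pow 3 y).div_const 6)).add ((hasDerivAt_pow 5 y).div_const 120)).sub ((hasDerivAt_pow 7 y).div_const 5040))
      refine this.congr_deriv ?_
      simp; ring
    exact (Real.hasDerivAt_sin y).sub h2
  linarith

noncomputable def mvA : ℝ := Real.pi * (2 - Real.sqrt 2) / (Real.pi - 2 * Real.sqrt 2)
noncomputable def mvB : ℝ := Real.sqrt 2 * (4 - Real.pi) / (Real.pi - 2 * Real.sqrt 2)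

private lemma sqrt2_sq : Real.sqrt 2 ^ 2 = 2 := Real.sq_sqrt (by norm_num)

private lemma sqrt2_lb : 1.4142135 ≤ Real.sqrt 2 := by
  nlinarith [sqrt2_sq, Real.sqrt_nonneg 2]

private lemma sqrt2_ub : Real.sqrt 2 ≤ 1.4142136 := by
  nlinarith [sqrt2_sq, Real.sqrt_nonneg 2]

private lemma den_pos : 0 < Real.pi - 2 * Real.sqrt 2 := by
  nlinarith [Real.pi_gt_d6, sqrt2_ub]

private lemma mvA_lb : 5.8764 ≤ mvA := by
  rw [mvA, le_div_iff₀ den_pos]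
  nlinarith [Real.pi_gt_d6, Real.pi_lt_d6, sqrt2_lb, sqrt2_ub]

private lemma mvA_ub : mvA ≤ 5.8765 := by
  rw [mvA, div_le_iff₀ den_pos]
  nlinarith [Real.pi_gt_d6, Real.pi_lt_d6, sqrt2_lb, sqrt2_ub]

private lemma mvB_eq : mvB = mvA - 2 := by
  rw [mvA, mvB]
  rw [eq_sub_iff_add_eq, div_add' _ _ _ (ne_of_gt den_pos),
    div_eq_div_iff (ne_of_gt den_pos) (ne_of_gt den_pos)]
  ring

private lemma mvB_pos : 0 < mvB := by
  rw [mvB]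
  apply div_pos _ den_pos
  nlinarith [Real.pi_lt_d6, sqrt2_lb]


private lemma g_nonneg_small {t : ℝ} (h0 : 0 ≤ t) (h1 : t ≤ 3/5) :
    mvB * t + 2 * (t * Real.cos t) ≤ mvA * Real.sin t := by
  have hs := my_sin_ge7 h0
  have hc := my_cos_le4 h0
  have hA1 := mvA_lb
  have hA2 := mvA_ub
  have hp3 : (0:ℝ) ≤ t^3 := by positivity
  have hp5 : (0:ℝ) ≤ t^5 := by positivity
  have hp7 : (0:ℝ) ≤ t^7 := by positivity
  have ht2 : t^2 ≤ 9/25 := by nlinarith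
  have h5 : t^5 ≤ 9/25*t^3 := by nlinarith [mul_nonneg hp3 (sub_nonneg.2 ht2)]
  have h7 : t^7 ≤ 81/625*t^3 := by nlinarith [mul_nonneg hp5 (sub_nonneg.2 ht2), mul_nonneg hp3 (sub_nonneg.2 ht2)]
  have hAs : mvA * (t - t^3/6 + t^5/120 - t^7/5040) ≤ mvA * Real.sin t :=
    mul_le_mul_of_nonneg_left hs (by linarith)
  have hct : 2 * (t * Real.cos t) ≤ 2 * (t * (1 - t^2/2 + t^4/24)) := by
    nlinarith [mul_nonneg h0 (sub_nonneg.2 hc)]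
  have q1 : 0.0205*t^3 ≤ (1 - mvA/6)*t^3 :=
    mul_le_mul_of_nonneg_right (by linarith) hp3
  have q2 : (1/12 - mvA/120)*t^5 ≤ 0.03437*t^5 :=
    mul_le_mul_of_nonneg_right (by linarith) hp5
  have q3 : (mvA/5040)*t^7 ≤ 0.00117*t^7 :=
    mul_le_mul_of_nonneg_right (by linarith) hp7
  have hB := mvB_eq
  nlinarith [hAs, hct, q1, q2, q3, h5, h7]

private lemma gpp_nonpos {x : ℝ} (h0 : 3/5 ≤ x) (h1 : x ≤ Real.pi/4) :
    (4 - mvA) * Real.sin x + 2 * (x * Real.cos x) ≤ 0 := by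
  have hx0 : (0:ℝ) ≤ x := by linarith
  have hπ : x ≤ Real.pi := by linarith [Real.pi_pos]
  have hcx : Real.cos x ≤ Real.cos (3/5) :=
    Real.cos_le_cos_of_nonneg_of_le_pi (by norm_num) hπ h0
  have hc35 : Real.cos (3/5) ≤ 0.8254 := by
    have := my_cos_le4 (x := 3/5) (by norm_num)
    norm_num at this
    linarith
  have hsx : x - x^3/6 ≤ Real.sin x := my_sin_ge3 hx0
  have hx2 : x^2 ≤ 0.61686 := by nlinarith [Real.pi_lt_d6]
  have hA := mvA_lb
  have p1 : 2*(x*Real.cos x) ≤ 2*(x*(0.8254:ℝ)) := by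
    nlinarith [mul_nonneg hx0 (sub_nonneg.2 (hcx.trans hc35))]
  have hq : (0:ℝ) ≤ x - x^3/6 := by nlinarith
  have p2 : (mvA - 4)*(x - x^3/6) ≤ (mvA - 4)*Real.sin x :=
    mul_le_mul_of_nonneg_left hsx (by linarith)
  have p3 : 1.8764*(x - x^3/6) ≤ (mvA - 4)*(x - x^3/6) :=
    mul_le_mul_of_nonneg_right (by linarith) hq
  have p4 : x^3 ≤ 0.61686*x := by nlinarith
  linarith

private lemma g_quarter_pi :
    mvA * Real.sin (Real.pi/4) - (mvB * (Real.pi/4) + 2*(Real.pi/4*Real.cos (Real.pi/4))) = 0 := by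
  have hD := ne_of_gt den_pos
  rw [Real.sin_pi_div_four, Real.cos_pi_div_four, mvA, mvB]
  field_simp [hD]
  ring

private lemma key {t : ℝ} (h0 : 0 ≤ t) (h1 : t ≤ Real.pi/4) :
    mvB * t + 2 * (t * Real.cos t) ≤ mvA * Real.sin t := by
  rcases le_or_gt t (3/5) with h | h
  · exact g_nonneg_small h0 h
  set g : ℝ → ℝ := fun y => mvA * Real.sin y - (mvB * y + 2*(y*Real.cos y)) with hg
  have hL : (3:ℝ)/5 < Real.pi/4 := by nlinarith [Real.pi_gt_d6]
  have hder : ∀ y : ℝ, HasDerivAt g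
      (mvA * Real.cos y - (mvB + 2*(Real.cos y - y*Real.sin y))) y := by
    intro y
    have h1 := (Real.hasDerivAt_sin y).const_mul mvA
    have h2 := (hasDerivAt_id' (𝕜 := ℝ) y).const_mul mvB
    have h3 := ((hasDerivAt_id' (𝕜 := ℝ) y).mul (Real.hasDerivAt_cos y)).const_mul 2
    have := h1.sub (h2.add h3)
    refine this.congr_deriv ?_
    ring
  have hder2 : ∀ y : ℝ, HasDerivAt
      (fun y => mvA * Real.cos y - (mvB + 2*(Real.cos y - y*Real.sin y)))
      ((4 - mvA) * Real.sin y + 2*(y*Real.cos y)) y := by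
    intro y
    have h1 := (Real.hasDerivAt_cos y).const_mul mvA
    have h2 := hasDerivAt_const y mvB
    have h3 := (((Real.hasDerivAt_cos y)).sub
      ((hasDerivAt_id' (𝕜 := ℝ) y).mul (Real.hasDerivAt_sin y))).const_mul 2
    have := h1.sub (h2.add h3)
    refine this.congr_deriv ?_
    ring
  have hconc : ConcaveOn ℝ (Icc (3/5) (Real.pi/4)) g := by
    apply concaveOn_of_hasDerivWithinAt2_nonpos (convex_Icc _ _)
      (f' := fun y => mvA * Real.cos y - (mvB + 2*(Real.cos y - y*Real.sin y)))
      (f'' := fun y => (4 - mvA) * Real.sin y + 2*(y*Real.cos y))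
    · exact Continuous.continuousOn (by fun_prop)
    · intro y _; exact (hder y).hasDerivWithinAt
    · intro y _; exact (hder2 y).hasDerivWithinAt
    · intro y hy
      rw [interior_Icc] at hy
      exact gpp_nonpos hy.1.le hy.2.le
  set L : ℝ := Real.pi/4 - 3/5 with hLdef
  have hLpos : 0 < L := by simp [hLdef]; linarith
  set a : ℝ := (Real.pi/4 - t)/L with hadef
  set b : ℝ := (t - 3/5)/L with hbdef
  have ha : 0 ≤ a := div_nonneg (by linarith) hLpos.le
  have hb : 0 ≤ b := div_nonneg (by linarith) hLpos.le
  have hab : a + b = 1 := by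
    rw [hadef, hbdef, ← add_div,
      show Real.pi/4 - t + (t - 3/5) = L by rw [hLdef]; ring]
    exact div_self (ne_of_gt hLpos)
  have hcomb := hconc.2 (x := 3/5) (y := Real.pi/4)
    ⟨le_refl _, hL.le⟩ ⟨hL.le, le_refl _⟩ ha hb hab
  have hteq : a • (3/5 : ℝ) + b • (Real.pi/4) = t := by
    rw [smul_eq_mul, smul_eq_mul, hadef, hbdef]
    field_simp
    ring
  rw [hteq] at hcomb
  have h35 : 0 ≤ g (3/5) := by
    have := g_nonneg_small (t := 3/5) (by norm_num) (by norm_num)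
    simp only [hg]
    linarith
  have hq : g (Real.pi/4) = 0 := g_quarter_pi
  clear_value g L a b
  rw [hq] at hcomb
  simp only [smul_eq_mul, mul_zero, add_zero] at hcomb
  have hgt : 0 ≤ g t := le_trans (mul_nonneg ha h35) hcomb
  rw [hg] at hgt
  simp only at hgt
  linarith



theorem arcsin_le_phiBound (x : ℝ) (hx : 0 ≤ x) (hx' : x ≤ 1) :
    Real.arcsin x ≤ phiBound x := by
  have hx1 : (-1:ℝ) ≤ x := by linarith
  set θ := Real.arcsin x with hθdef
  have hθ0 : 0 ≤ θ := Real.arcsin_nonneg.2 hx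
  have hθ2 : θ ≤ Real.pi/2 := Real.arcsin_le_pi_div_two x
  have hsθ : Real.sin θ = x := Real.sin_arcsin hx1 hx'
  set t := θ/2 with htdef
  set s := Real.sin t with hsdef
  set c := Real.cos t with hcdef
  have hπ := Real.pi_pos
  have ht0 : 0 ≤ t := by simp [htdef]; linarith
  have ht4 : t ≤ Real.pi/4 := by simp [htdef]; linarith
  have hs0 : 0 ≤ s := Real.sin_nonneg_of_nonneg_of_le_pi ht0 (by linarith)
  have hc0 : 0 < c := Real.cos_pos_of_mem_Ioo ⟨by linarith, by linarith⟩
  have hpyth : s^2 + c^2 = 1 := Real.sin_sq_add_cos_sq t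
  have hx2sc : x = 2*s*c := by
    rw [← hsθ, show θ = 2*t by rw [htdef]; ring, Real.sin_two_mul]
  have hcosθ : 0 ≤ Real.cos θ := Real.cos_nonneg_of_mem_Icc ⟨by linarith, hθ2⟩
  have hc2s2 : c^2 - s^2 = Real.cos θ := by
    rw [hsdef, hcdef, ← Real.cos_two_mul', show 2*t = θ by rw [htdef]; ring]
  have hcs : s ≤ c := by nlinarith
  have h1p : Real.sqrt (1 + x) = c + s := by
    rw [show 1 + x = (c+s)^2 by nlinarith]
    exact Real.sqrt_sq (by linarith)
  have h1m : Real.sqrt (1 - x) = c - s := by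
    rw [show 1 - x = (c-s)^2 by nlinarith]
    exact Real.sqrt_sq (by linarith)
  have hd : 0 < mvB + 2*c := by linarith [mvB_pos]
  have hphi : phiBound x = mvA * (2*s) / (mvB + 2*c) := by
    rw [phiBound, h1p, h1m, mvA, mvB]
    ring_nf
  rw [hphi, le_div_iff₀ hd]
  have hk := key ht0 ht4
  have hθt : θ = 2*t := by rw [htdef]; ring
  nlinarith [hk]
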